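/- With Ğ(y,x) as defined, if y ∈ (0,1/2) then Ğ(y,x) > 0 for all x ∈ (0,1). Moreover if x and y are restricted to compact subsets of (0,1) and (0,1/2) respectively, then Ğ(y,x) is bounded below by a positive constant. -/

import Mathlib

/-- Two-point (Bernoulli) Kullback–Leibler divergence (natural log). -/
noncomputable def klBer (a b : ℝ) : ℝ :=
  a * Real.log (a / b) + (1 - a) * Real.log ((1 - a) / (1 - b))

/-- Binary entropy (base 2). -/
noncomputable def binEnt (x : ℝ) : ℝ := -x * Real.logb 2 x - (1 - x) * Real.logb 2 (1 - x)

/-- `y_{(x)} = y + (1-y)(2^{1-x} - 1)`. -/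
noncomputable def yOf (y x : ℝ) : ℝ := y + (1 - y) * ((2 : ℝ) ^ (1 - x) - 1)

/-- The function `G(y, y', x)`. -/
noncomputable def Gfun (y y' x : ℝ) : ℝ :=
  x / 2 * klBer y (1 / 2) + y' * klBer (y / y') ((2 : ℝ) ^ (-(1 - x)))
    - klBer y (1 / 2) + 1 / 2 * klBer y' ((2 : ℝ) ^ (-x))

/-- `Ğ(y,x) = G(y, y_{(x)}, x)`. -/
noncomputable def Gbr (y x : ℝ) : ℝ := Gfun y (yOf y x) x

open Real

/-- auxiliary constant -/
noncomputable def cof (y : ℝ) : ℝ := 1 + (y * log y + (1 - y) * log (1 - y)) / log 2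

/-- Simplified form of `Ğ` as a function of `t = 2^{1-x}`. -/
noncomputable def Fof (y t : ℝ) : ℝ :=
  (y * log y - (1 - y) * log (1 - y)) / 2 +
    ((1 - y) * log (1 - y) * t + (y + (1 - y) * (t - 1) - cof y) * log t
      - (y + (1 - y) * (t - 1)) * log (y + (1 - y) * (t - 1))) / 2

/-- derivative of `Fof y` in `t` -/
noncomputable def F1 (y t : ℝ) : ℝ :=
  ((1 - y) * (log (1 - y) + log t - log (y + (1 - y) * (t - 1)) - 1)
    + (y + (1 - y) * (t - 1) - cof y) / t) / 2

/-- `t(x) = 2^{1-x}` -/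
noncomputable def texp (x : ℝ) : ℝ := (2 : ℝ) ^ (1 - x)

/-- `h y x = Fof y (texp x)` -/
noncomputable def hfun (y x : ℝ) : ℝ := Fof y (texp x)

/-- first derivative of `hfun y` -/
noncomputable def h1 (y x : ℝ) : ℝ := F1 y (texp x) * (-(log 2 * texp x))

/-- second derivative of `hfun y` -/
noncomputable def h2 (y x : ℝ) : ℝ :=
  (log 2) ^ 2 * texp x * (1 - y) / 2 *
    (log ((1 - y) * texp x / (y + (1 - y) * (texp x - 1))) + 1
      - (1 - y) * texp x / (y + (1 - y) * (texp x - 1)))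

lemma texp_pos (x : ℝ) : 0 < texp x := Real.rpow_pos_of_pos two_pos _

lemma texp_hasDerivAt (x : ℝ) : HasDerivAt texp (-(log 2 * texp x)) x := by
  have h := (Real.hasStrictDerivAt_const_rpow (a := 2) two_pos (1 - x)).hasDerivAt
  have h2 := ((hasDerivAt_id x).const_sub 1)
  have := h.comp x h2
  refine this.congr_deriv ?_
  simp [texp]
  ring

lemma texp_continuous : Continuous texp :=
  continuous_iff_continuousAt.2 fun x => (texp_hasDerivAt x).differentiableAt.continuousAt

lemma Fof_hasDerivAt (y : ℝ) {t : ℝ} (ht : 0 < t) (hyt : 0 < y + (1 - y) * (t - 1)) :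
    HasDerivAt (Fof y) (F1 y t) t := by
  have hyt' : HasDerivAt (fun t : ℝ => y + (1 - y) * (t - 1)) (1 - y) t := by
    simpa using (((hasDerivAt_id t).sub_const 1).const_mul (1 - y)).const_add y
  have hlyt : HasDerivAt (fun t : ℝ => log (y + (1 - y) * (t - 1)))
      ((y + (1 - y) * (t - 1))⁻¹ * (1 - y)) t :=
    HasDerivAt.comp t (Real.hasDerivAt_log hyt.ne') hyt'
  have hA : HasDerivAt (fun t : ℝ => (1 - y) * log (1 - y) * t) ((1 - y) * log (1 - y)) t := by
    simpa using (hasDerivAt_id t).const_mul ((1 - y) * log (1 - y))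
  have hB : HasDerivAt (fun t : ℝ => (y + (1 - y) * (t - 1) - cof y) * log t)
      ((1 - y) * log t + (y + (1 - y) * (t - 1) - cof y) * t⁻¹) t :=
    (hyt'.sub_const (cof y)).mul (Real.hasDerivAt_log ht.ne')
  have hC : HasDerivAt (fun t : ℝ => (y + (1 - y) * (t - 1)) * log (y + (1 - y) * (t - 1)))
      ((1 - y) * log (y + (1 - y) * (t - 1))
        + (y + (1 - y) * (t - 1)) * ((y + (1 - y) * (t - 1))⁻¹ * (1 - y))) t :=
    hyt'.mul hlyt
  have := (((hA.add hB).sub hC).div_const 2).const_add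
    ((y * log y - (1 - y) * log (1 - y)) / 2)
  refine this.congr_deriv ?_
  unfold F1
  field_simp
  ring

lemma hfun_hasDerivAt (y : ℝ) {x : ℝ} (hyt : 0 < y + (1 - y) * (texp x - 1)) :
    HasDerivAt (hfun y) (h1 y x) x :=
  (Fof_hasDerivAt y (texp_pos x) hyt).comp x (texp_hasDerivAt x)

lemma F1_hasDerivAt (y : ℝ) {t : ℝ} (ht : 0 < t) (hyt : 0 < y + (1 - y) * (t - 1)) :
    HasDerivAt (F1 y)
      (((1 - y) * (t⁻¹ - (y + (1 - y) * (t - 1))⁻¹ * (1 - y))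
        + ((1 - y) * t - (y + (1 - y) * (t - 1) - cof y) * 1) / t ^ 2) / 2) t := by
  have hyt' : HasDerivAt (fun t : ℝ => y + (1 - y) * (t - 1)) (1 - y) t := by
    simpa using (((hasDerivAt_id t).sub_const 1).const_mul (1 - y)).const_add y
  have hlyt : HasDerivAt (fun t : ℝ => log (y + (1 - y) * (t - 1)))
      ((y + (1 - y) * (t - 1))⁻¹ * (1 - y)) t :=
    HasDerivAt.comp t (Real.hasDerivAt_log hyt.ne') hyt'
  have hA : HasDerivAt (fun t : ℝ =>
      (1 - y) * (log (1 - y) + log t - log (y + (1 - y) * (t - 1)) - 1))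
      ((1 - y) * (t⁻¹ - (y + (1 - y) * (t - 1))⁻¹ * (1 - y))) t := by
    have := ((((Real.hasDerivAt_log ht.ne').const_add (log (1 - y))).sub hlyt).sub_const
      1).const_mul (1 - y)
    exact this
  have hB : HasDerivAt (fun t : ℝ => (y + (1 - y) * (t - 1) - cof y) / t)
      (((1 - y) * t - (y + (1 - y) * (t - 1) - cof y) * 1) / t ^ 2) t :=
    (hyt'.sub_const (cof y)).div (hasDerivAt_id t) ht.ne'
  exact (hA.add hB).div_const 2

lemma h1_hasDerivAt (y : ℝ) {x : ℝ} (hy1 : y < 1) (hyt : 0 < y + (1 - y) * (texp x - 1)) :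
    HasDerivAt (h1 y) (h2 y x) x := by
  set t := texp x with htdef
  have ht : 0 < t := texp_pos x
  have hG : HasDerivAt (fun t : ℝ => F1 y t * (-(log 2 * t)))
      ((((1 - y) * (t⁻¹ - (y + (1 - y) * (t - 1))⁻¹ * (1 - y))
        + ((1 - y) * t - (y + (1 - y) * (t - 1) - cof y) * 1) / t ^ 2) / 2) * (-(log 2 * t))
        + F1 y t * (-(log 2 * 1))) t := by
    have hneg : HasDerivAt (fun t : ℝ => -(log 2 * t)) (-(log 2 * 1)) t := by
      exact ((hasDerivAt_id t).const_mul (log 2)).neg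
    exact (F1_hasDerivAt y ht hyt).mul hneg
  have := hG.comp x (texp_hasDerivAt x)
  refine this.congr_deriv ?_
  have hlog : log ((1 - y) * t / (y + (1 - y) * (t - 1)))
      = log (1 - y) + log t - log (y + (1 - y) * (t - 1)) := by
    rw [Real.log_div (mul_pos (by linarith : (0:ℝ) < 1 - y) ht).ne' hyt.ne',
      Real.log_mul (by linarith : (1:ℝ) - y ≠ 0) ht.ne']
  unfold h2 F1
  rw [← htdef, hlog]
  field_simp
  ring

lemma Gbr_eq_hfun (y x : ℝ) (hy0 : 0 < y) (hy : y < 1 / 2) (hx : x ∈ Set.Ioo (0:ℝ) 1) :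
    Gbr y x = hfun y x := by
  obtain ⟨hx0, hx1⟩ := hx
  have hy1 : y < 1 := by linarith
  have ha : (0:ℝ) < 1 - y := by linarith
  have hrw1 : (2:ℝ) ^ (-(1 - x)) = ((2:ℝ) ^ (1 - x))⁻¹ := Real.rpow_neg (by norm_num) _
  have hrw2 : (2:ℝ) ^ (-x) = (2:ℝ) ^ (1 - x) / 2 := by
    rw [show -x = (1 - x) - 1 by ring, Real.rpow_sub two_pos, Real.rpow_one]
  unfold Gbr Gfun klBer yOf hfun Fof texp cof
  rw [hrw1, hrw2]
  set t := (2:ℝ) ^ (1 - x) with htdef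
  have ht0 : 0 < t := Real.rpow_pos_of_pos two_pos _
  have ht1 : 1 < t := (Real.one_lt_rpow_iff_of_pos two_pos).2 (Or.inl ⟨one_lt_two, by linarith⟩)
  have ht2 : t < 2 := by
    have h := (Real.rpow_lt_rpow_left_iff (x := 2) one_lt_two).2 (show 1 - x < 1 by linarith)
    simpa using h
  have hyt : 0 < y + (1 - y) * (t - 1) := by nlinarith
  have hL : Real.log 2 ≠ 0 := (Real.log_pos one_lt_two).ne'
  have hxeq : x = 1 - Real.log t / Real.log 2 := by
    rw [htdef, Real.log_rpow two_pos]
    field_simp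
    ring
  have e0a : y / (1/2 : ℝ) = 2 * y := by ring
  have e0b : (1 - y) / (1 - 1/2 : ℝ) = 2 * (1 - y) := by ring
  have e1 : y / (y + (1 - y) * (t - 1)) / t⁻¹ = y * t / (y + (1 - y) * (t - 1)) := by
    field_simp
  have e2 : (1 - y / (y + (1 - y) * (t - 1))) / (1 - t⁻¹)
      = (1 - y) * t / (y + (1 - y) * (t - 1)) := by
    have h1t : (0:ℝ) < 1 - t⁻¹ := by
      rw [sub_pos]
      exact inv_lt_one_of_one_lt₀ ht1
    rw [div_eq_div_iff h1t.ne' hyt.ne']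
    field_simp
    ring
  have e3 : (1 - (y + (1 - y) * (t - 1))) / (1 - t / 2) = 2 * (1 - y) := by
    rw [div_eq_iff (by nlinarith : (1:ℝ) - t / 2 ≠ 0)]
    ring
  have e4 : (y + (1 - y) * (t - 1)) / (t / 2) = 2 * (y + (1 - y) * (t - 1)) / t := by
    field_simp
  rw [e0a, e0b, e1, e2, e3, e4]
  simp only [Real.log_mul two_ne_zero hy0.ne', Real.log_mul two_ne_zero ha.ne',
    Real.log_div (mul_pos hy0 ht0).ne' hyt.ne', Real.log_mul hy0.ne' ht0.ne',
    Real.log_div (mul_pos ha ht0).ne' hyt.ne', Real.log_mul ha.ne' ht0.ne',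
    Real.log_div (mul_pos two_pos hyt).ne' ht0.ne', Real.log_mul two_ne_zero hyt.ne']
  rw [hxeq]
  field_simp
  ring

lemma yt_pos_of_mem (y : ℝ) (hy0 : 0 < y) (hy1 : y < 1) {x : ℝ} (hx : x ∈ Set.Icc (0:ℝ) 1) :
    0 < y + (1 - y) * (texp x - 1) := by
  have ht1 : 1 ≤ texp x := by
    have h := (Real.rpow_le_rpow_left_iff (x := 2) one_lt_two).2 (show (0:ℝ) ≤ 1 - x by
      simpa using hx.2)
    simpa [texp] using h
  nlinarith

lemma hfun_zero (y : ℝ) (hy0 : 0 < y) (hy1 : y < 1) : hfun y 0 = 0 := by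
  have hL : Real.log 2 ≠ 0 := (Real.log_pos one_lt_two).ne'
  have ht : texp 0 = 2 := by
    simp [texp]
  unfold hfun Fof cof
  rw [ht, show y + (1 - y) * ((2:ℝ) - 1) = 1 by ring, Real.log_one]
  field_simp
  ring

lemma hfun_one (y : ℝ) (hy0 : 0 < y) (hy1 : y < 1) : hfun y 1 = 0 := by
  have ht : texp 1 = 1 := by
    simp [texp]
  unfold hfun Fof cof
  rw [ht, show y + (1 - y) * ((1:ℝ) - 1) = y by ring, Real.log_one]
  ring

lemma h2_neg (y : ℝ) (hy0 : 0 < y) (hy : y < 1 / 2) {x : ℝ}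
    (hyt : 0 < y + (1 - y) * (texp x - 1)) : h2 y x < 0 := by
  have ha : (0:ℝ) < 1 - y := by linarith
  have ht : 0 < texp x := texp_pos x
  set z := (1 - y) * texp x / (y + (1 - y) * (texp x - 1)) with hz
  have hz0 : 0 < z := by positivity
  have hz1 : z ≠ 1 := by
    intro h
    rw [hz, div_eq_one_iff_eq hyt.ne'] at h
    nlinarith
  have hlog := Real.log_lt_sub_one_of_pos hz0 hz1
  have hC : 0 < (log 2) ^ 2 * texp x * (1 - y) / 2 := by
    have : 0 < log 2 := Real.log_pos one_lt_two
    positivity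
  unfold h2
  rw [← hz]
  nlinarith

lemma hfun_strictConcave (y : ℝ) (hy0 : 0 < y) (hy : y < 1 / 2) :
    StrictConcaveOn ℝ (Set.Icc (0:ℝ) 1) (hfun y) := by
  have hy1 : y < 1 := by linarith
  apply strictConcaveOn_of_deriv2_neg (convex_Icc 0 1)
  · intro x hx
    exact ((hfun_hasDerivAt y (yt_pos_of_mem y hy0 hy1 hx)).continuousAt).continuousWithinAt
  · intro x hx
    rw [interior_Icc] at hx
    have hyt : 0 < y + (1 - y) * (texp x - 1) :=
      yt_pos_of_mem y hy0 hy1 ⟨hx.1.le, hx.2.le⟩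
    have hU : IsOpen {z : ℝ | 0 < y + (1 - y) * (texp z - 1)} := by
      exact isOpen_lt continuous_const
        (continuous_const.add (continuous_const.mul (texp_continuous.sub continuous_const)))
    have hev : deriv (hfun y) =ᶠ[nhds x] h1 y := by
      filter_upwards [hU.mem_nhds hyt] with z hz
      exact (hfun_hasDerivAt y hz).deriv
    have hd1 : deriv (deriv (hfun y)) x = deriv (h1 y) x := hev.deriv_eq
    have hd2 : deriv (h1 y) x = h2 y x := (h1_hasDerivAt y hy1 hyt).deriv
    show deriv^[2] (hfun y) x < 0
    simp only [Function.iterate_succ, Function.iterate_zero, Function.comp_apply, id_eq]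
    rw [hd1, hd2]
    exact h2_neg y hy0 hy hyt

lemma hfun_pos (y : ℝ) (hy0 : 0 < y) (hy : y < 1 / 2) {x : ℝ} (hx : x ∈ Set.Ioo (0:ℝ) 1) :
    0 < hfun y x := by
  have hy1 : y < 1 := by linarith
  have sc := hfun_strictConcave y hy0 hy
  have h01 : (0:ℝ) ∈ Set.Icc (0:ℝ) 1 := by norm_num
  have h11 : (1:ℝ) ∈ Set.Icc (0:ℝ) 1 := by norm_num
  obtain ⟨hx1, hx2⟩ := hx
  have := sc.2 h01 h11 (by norm_num) (show 0 < 1 - x by linarith) hx1 (by ring)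
  rw [hfun_zero y hy0 hy1, hfun_one y hy0 hy1] at this
  simpa using this

lemma Gbr_pos (y : ℝ) (hy0 : 0 < y) (hy : y < 1 / 2) {x : ℝ} (hx : x ∈ Set.Ioo (0:ℝ) 1) :
    0 < Gbr y x := by
  rw [Gbr_eq_hfun y x hy0 hy hx]
  exact hfun_pos y hy0 hy hx

theorem Gbr_positive (y : ℝ) (hy0 : 0 < y) (hy : y < 1 / 2) :
    (∀ x ∈ Set.Ioo (0 : ℝ) 1, 0 < Gbr y x) ∧
      ∀ Kx Ky : Set ℝ, IsCompact Kx → Kx ⊆ Set.Ioo (0 : ℝ) 1 →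
        IsCompact Ky → Ky ⊆ Set.Ioo (0 : ℝ) (1 / 2) →
          ∃ c : ℝ, 0 < c ∧ ∀ y' ∈ Ky, ∀ x ∈ Kx, c ≤ Gbr y' x := by
  constructor
  · intro x hx
    exact Gbr_pos y hy0 hy hx
  · intro Kx Ky hKx hKxs hKy hKys
    rcases Ky.eq_empty_or_nonempty with hKye | hKyne
    · exact ⟨1, one_pos, by simp [hKye]⟩
    rcases Kx.eq_empty_or_nonempty with hKxe | hKxne
    · exact ⟨1, one_pos, fun y' _ x hx => absurd hx (by simp [hKxe])⟩
    -- work on the product set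
    set K : Set (ℝ × ℝ) := Ky ×ˢ Kx with hK
    have hKc : IsCompact K := hKy.prod hKx
    have hKne : K.Nonempty := hKyne.prod hKxne
    have hcont : ContinuousOn (fun p : ℝ × ℝ => Gbr p.1 p.2) K := by
      intro p hp
      have hp1 : p.1 ∈ Set.Ioo (0:ℝ) (1/2) := hKys hp.1
      have hp2 : p.2 ∈ Set.Ioo (0:ℝ) 1 := hKxs hp.2
      -- continuity of the smooth representative
      have hyt : 0 < p.1 + (1 - p.1) * (texp p.2 - 1) :=
        yt_pos_of_mem p.1 hp1.1 (by linarith [hp1.2]) ⟨hp2.1.le, hp2.2.le⟩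
      have hcF : ContinuousAt (fun q : ℝ × ℝ => hfun q.1 q.2) p := by
        have hc1 : ContinuousAt (fun q : ℝ × ℝ => q.1) p := continuousAt_fst
        have hct : ContinuousAt (fun q : ℝ × ℝ => texp q.2) p :=
          (texp_continuous.comp continuous_snd).continuousAt
        have hcyt : ContinuousAt (fun q : ℝ × ℝ => q.1 + (1 - q.1) * (texp q.2 - 1)) p :=
          hc1.add (((continuousAt_const.sub hc1)).mul (hct.sub continuousAt_const))
        have hly : ContinuousAt (fun q : ℝ × ℝ => log q.1) p := hc1.log hp1.1.ne'
        have hla : ContinuousAt (fun q : ℝ × ℝ => log (1 - q.1)) p :=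
          (continuousAt_const.sub hc1).log
            (show (1:ℝ) - p.1 ≠ 0 from (by linarith [hp1.2] : (0:ℝ) < 1 - p.1).ne')
        have hlt : ContinuousAt (fun q : ℝ × ℝ => log (texp q.2)) p :=
          hct.log (texp_pos p.2).ne'
        have hlyt : ContinuousAt
            (fun q : ℝ × ℝ => log (q.1 + (1 - q.1) * (texp q.2 - 1))) p :=
          hcyt.log hyt.ne'
        have hccof : ContinuousAt (fun q : ℝ × ℝ => cof q.1) p := by
          unfold cof
          exact continuousAt_const.add
            (((hc1.mul hly).add ((continuousAt_const.sub hc1).mul hla)).div_const _)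
        have hpart1 : ContinuousAt
            (fun q : ℝ × ℝ => (q.1 * log q.1 - (1 - q.1) * log (1 - q.1)) / 2) p :=
          ((hc1.mul hly).sub ((continuousAt_const.sub hc1).mul hla)).div_const 2
        have hpart2 : ContinuousAt (fun q : ℝ × ℝ =>
            ((1 - q.1) * log (1 - q.1) * texp q.2
              + (q.1 + (1 - q.1) * (texp q.2 - 1) - cof q.1) * log (texp q.2)
              - (q.1 + (1 - q.1) * (texp q.2 - 1))
                * log (q.1 + (1 - q.1) * (texp q.2 - 1))) / 2) p :=
          (((((continuousAt_const.sub hc1).mul hla).mul hct).add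
              ((hcyt.sub hccof).mul hlt)).sub (hcyt.mul hlyt)).div_const 2
        exact hpart1.add hpart2
      have hev : (fun q : ℝ × ℝ => Gbr q.1 q.2) =ᶠ[nhds p] fun q => hfun q.1 q.2 := by
        have hUo : IsOpen (Set.Ioo (0:ℝ) (1/2) ×ˢ Set.Ioo (0:ℝ) 1) :=
          isOpen_Ioo.prod isOpen_Ioo
        filter_upwards [hUo.mem_nhds ⟨hp1, hp2⟩] with q hq
        exact Gbr_eq_hfun q.1 q.2 hq.1.1 hq.1.2 hq.2
      exact (hcF.congr hev.symm).continuousWithinAt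
    obtain ⟨p, hpK, hmin⟩ := hKc.exists_isMinOn hKne hcont
    refine ⟨Gbr p.1 p.2, ?_, ?_⟩
    · have hp1 : p.1 ∈ Set.Ioo (0:ℝ) (1/2) := hKys hpK.1
      exact Gbr_pos p.1 hp1.1 hp1.2 (hKxs hpK.2)
    · intro y' hy' x hx
      exact hmin (Set.mk_mem_prod hy' hx)
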